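/- Suppose the costs obey increasing differences, i.e. for all agents i < i' and all actions 0 ≤ j < j' ≤ m one has c_{i,j} − c_{i',j} < c_{i,j'} − c_{i',j'} (where c_{i,0} = 0 for every agent). Define φ(i,j) = ρ_j − c_{i,j} − (n−i)(c_{i,j} − c_{i+1,j}) for 1 ≤ i ≤ n−1 and φ(n,j) = ρ_j − c_{n,j}. Then: (a) for every payment profile (t_0=0,t_1,…,t_m) and every tuple (j_1,…,j_n) in which j_i is a best response for agent i, the principal's payoff Σ_{i=1}^n (ρ_{j_i} − t_{j_i}) is at most M := max over all 0 ≤ j_1 ≤ … ≤ j_n ≤ m of Σ_{i=1}^n φ(i,j_i); and (b) there exist a payment profile and a tuple of best responses (one per agent) whose principal's payoff equals M. Consequently, the optimal principal payoff (agents tie-breaking in favor of the principal) equals M. -/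

import Mathlib

lemma aux_tel (f : ℕ → ℝ) (k i : ℕ) (h : k ≤ i) :
    ∑ l ∈ Finset.Ico k i, (f l - f (l+1)) = f k - f i := by
  induction i, h using Nat.le_induction with
  | base => simp
  | succ i h ih => rw [Finset.sum_Ico_succ_top h, ih]; ring

lemma aux_swap (n : ℕ) (f : ℕ → ℝ) :
    ∑ i ∈ Finset.Icc 1 n, (∑ k ∈ Finset.Ico 1 i, f k)
      = ∑ k ∈ Finset.Ico 1 n, ((n : ℝ) - k) * f k := by
  induction n with
  | zero => simp
  | succ n ih =>
    rw [Finset.sum_Icc_succ_top (by omega : 1 ≤ n + 1), ih]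
    rcases Nat.eq_zero_or_pos n with h0 | h1
    · subst h0; simp
    have e1 : ∑ k ∈ Finset.Ico 1 (n+1), (((n+1 : ℕ) : ℝ) - k) * f k
        = ∑ k ∈ Finset.Ico 1 (n+1), (((n : ℝ) - k) * f k + f k) := by
      apply Finset.sum_congr rfl; intro x _; push_cast; ring
    rw [e1, Finset.sum_add_distrib,
      Finset.sum_Ico_succ_top h1 (f := fun k => ((n : ℝ) - k) * f k)]
    simp

lemma aux_phisum (n : ℕ) (hn : 1 ≤ n) (ρ : ℕ → ℝ) (c : ℕ → ℕ → ℝ) (φ : ℕ → ℕ → ℝ)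
    (hφ : ∀ i, 1 ≤ i → i < n → ∀ a, φ i a = ρ a - c i a - ((n : ℝ) - i) * (c i a - c (i + 1) a))
    (hφn : ∀ a, φ n a = ρ a - c n a) (j : ℕ → ℕ) :
    ∑ i ∈ Finset.Icc 1 n, φ i (j i)
      = ∑ i ∈ Finset.Icc 1 n, (ρ (j i) - c i (j i))
        - ∑ k ∈ Finset.Ico 1 n, ((n : ℝ) - k) * (c k (j k) - c (k+1) (j k)) := by
  have h1 : Finset.Icc 1 n = insert n (Finset.Ico 1 n) := (Finset.Ico_insert_right hn).symm
  have hnm : n ∉ Finset.Ico 1 n := by simp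
  have hcongr : ∑ i ∈ Finset.Ico 1 n, φ i (j i)
      = ∑ i ∈ Finset.Ico 1 n,
          (ρ (j i) - c i (j i) - ((n : ℝ) - i) * (c i (j i) - c (i + 1) (j i))) := by
    apply Finset.sum_congr rfl
    intro i hi
    rw [Finset.mem_Ico] at hi
    exact hφ i hi.1 hi.2 (j i)
  rw [h1, Finset.sum_insert hnm, Finset.sum_insert hnm, hφn, hcongr,
    Finset.sum_sub_distrib]
  ring

theorem stmt_4 (n m : ℕ) (hn : 1 ≤ n) (ρ : ℕ → ℝ) (c : ℕ → ℕ → ℝ)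
    (hρ0 : ρ 0 = 0) (hρ : ∀ k ≤ m, 0 ≤ ρ k)
    (hc0 : ∀ i, 1 ≤ i → i ≤ n → c i 0 = 0)
    (hcnn : ∀ i, 1 ≤ i → i ≤ n → ∀ k ≤ m, 0 ≤ c i k)
    (hid : ∀ i i' a a', 1 ≤ i → i < i' → i' ≤ n → a < a' → a' ≤ m →
      c i a - c i' a < c i a' - c i' a')
    (φ : ℕ → ℕ → ℝ)
    (hφ : ∀ i, 1 ≤ i → i < n → ∀ a, φ i a = ρ a - c i a - ((n : ℝ) - i) * (c i a - c (i + 1) a))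
    (hφn : ∀ a, φ n a = ρ a - c n a)
    (M : ℝ)
    (hM : IsGreatest {s : ℝ | ∃ j : ℕ → ℕ,
      (∀ i, 1 ≤ i → i ≤ n → j i ≤ m) ∧
      (∀ i, 1 ≤ i → i < n → j i ≤ j (i + 1)) ∧
      s = ∑ i ∈ Finset.Icc 1 n, φ i (j i)} M) :
    (∀ (t : ℕ → ℝ) (j : ℕ → ℕ), t 0 = 0 →
      (∀ i, 1 ≤ i → i ≤ n → j i ≤ m ∧ ∀ a ≤ m, t a - c i a ≤ t (j i) - c i (j i)) →
      ∑ i ∈ Finset.Icc 1 n, (ρ (j i) - t (j i)) ≤ M) ∧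
    (∃ (t : ℕ → ℝ) (j : ℕ → ℕ), t 0 = 0 ∧
      (∀ i, 1 ≤ i → i ≤ n → j i ≤ m ∧ ∀ a ≤ m, t a - c i a ≤ t (j i) - c i (j i)) ∧
      ∑ i ∈ Finset.Icc 1 n, (ρ (j i) - t (j i)) = M) := by
  classical
  constructor
  · -- Part (a)
    intro t j ht0 hbr
    have hjm : ∀ i, 1 ≤ i → i ≤ n → j i ≤ m := fun i h1 h2 => (hbr i h1 h2).1
    have hadj : ∀ i, 1 ≤ i → i < n → j i ≤ j (i+1) := by
      intro i h1 h2
      by_contra h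
      push_neg at h
      have h3 := (hbr i h1 (le_of_lt h2)).2 (j (i+1)) (hjm (i+1) (by omega) (by omega))
      have h4 := (hbr (i+1) (by omega) h2).2 (j i) (hjm i h1 (le_of_lt h2))
      have h5 := hid i (i+1) (j (i+1)) (j i) h1 (by omega) h2 h (hjm i h1 (le_of_lt h2))
      linarith
    set u : ℕ → ℝ := fun i => t (j i) - c i (j i) with hu
    set d : ℕ → ℝ := fun k => c k (j k) - c (k+1) (j k) with hd
    have hu0 : ∀ i, 1 ≤ i → i ≤ n → 0 ≤ u i := by
      intro i h1 h2
      have h3 := (hbr i h1 h2).2 0 (Nat.zero_le m)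
      have h4 := hc0 i h1 h2
      simp only [hu]
      rw [ht0, h4] at h3
      linarith
    have hstep : ∀ i, 1 ≤ i → i < n → u i + d i ≤ u (i+1) := by
      intro i h1 h2
      have h3 := (hbr (i+1) (by omega) h2).2 (j i) (hjm i h1 (le_of_lt h2))
      simp only [hu, hd]
      linarith
    have hulb : ∀ i, 1 ≤ i → i ≤ n → ∑ k ∈ Finset.Ico 1 i, d k ≤ u i := by
      intro i h1
      induction i, h1 using Nat.le_induction with
      | base => intro _; simpa using hu0 1 le_rfl hn
      | succ i h1 ih =>
        intro h2
        rw [Finset.sum_Ico_succ_top h1]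
        have h3 := hstep i h1 (by omega)
        have h4 := ih (by omega)
        linarith
    have hsum : ∑ k ∈ Finset.Ico 1 n, ((n:ℝ) - k) * d k ≤ ∑ i ∈ Finset.Icc 1 n, u i := by
      rw [← aux_swap n d]
      apply Finset.sum_le_sum
      intro i hi
      rw [Finset.mem_Icc] at hi
      exact hulb i hi.1 hi.2
    have hφsum := aux_phisum n hn ρ c φ hφ hφn j
    have hmem : ∑ i ∈ Finset.Icc 1 n, φ i (j i) ≤ M := hM.2 ⟨j, hjm, hadj, rfl⟩
    have heq : ∑ i ∈ Finset.Icc 1 n, (ρ (j i) - t (j i))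
        = ∑ i ∈ Finset.Icc 1 n, (ρ (j i) - c i (j i)) - ∑ i ∈ Finset.Icc 1 n, u i := by
      rw [← Finset.sum_sub_distrib]
      apply Finset.sum_congr rfl
      intro i _
      simp only [hu]
      ring
    simp only [hd] at hsum hφsum
    linarith
  · -- Part (b)
    obtain ⟨j, hjm, hadj, hMeq⟩ := hM.1
    have hmono : ∀ k i, 1 ≤ k → k ≤ i → i ≤ n → j k ≤ j i := by
      intro k i h1 h2
      induction i, h2 using Nat.le_induction with
      | base => intro _; exact le_rfl
      | succ i h2 ih =>
        intro h3
        exact le_trans (ih (by omega)) (hadj i (by omega) (by omega))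
    set d : ℕ → ℝ := fun k => c k (j k) - c (k+1) (j k) with hd
    set u : ℕ → ℝ := fun i => ∑ k ∈ Finset.Ico 1 i, d k with hu
    have hd0 : ∀ k, 1 ≤ k → k < n → 0 ≤ d k := by
      intro k h1 h2
      simp only [hd]
      rcases Nat.eq_zero_or_pos (j k) with h0 | hpos
      · rw [h0, hc0 k h1 (by omega), hc0 (k+1) (by omega) (by omega)]; simp
      · have := hid k (k+1) 0 (j k) h1 (by omega) (by omega) hpos (hjm k h1 (by omega))
        rw [hc0 k h1 (by omega), hc0 (k+1) (by omega) (by omega)] at this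
        linarith
    have hu0 : ∀ i, 1 ≤ i → i ≤ n → 0 ≤ u i := by
      intro i h1 h2
      simp only [hu]
      apply Finset.sum_nonneg
      intro k hk
      rw [Finset.mem_Ico] at hk
      exact hd0 k hk.1 (by omega)
    -- key incentive lemma
    have hkey : ∀ k i, 1 ≤ k → k ≤ n → 1 ≤ i → i ≤ n →
        c k (j k) - c i (j k) ≤ u i - u k := by
      intro k i hk1 hk2 hi1 hi2
      rcases le_or_gt k i with hki | hik
      · have hsplit : u i - u k = ∑ l ∈ Finset.Ico k i, d l := by
          simp only [hu]
          rw [← Finset.sum_Ico_consecutive _ (by omega : 1 ≤ k) hki]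
          ring
        rw [hsplit, ← aux_tel (fun l => c l (j k)) k i hki]
        apply Finset.sum_le_sum
        intro l hl
        rw [Finset.mem_Ico] at hl
        rcases eq_or_lt_of_le (hmono k l hk1 hl.1 (by omega)) with he | hlt
        · simp only [hd]; rw [← he]
        · have := hid l (l+1) (j k) (j l) (by omega) (by omega) (by omega) hlt
            (hjm l (by omega) (by omega))
          simp only [hd]
          linarith
      · have hsplit : u k - u i = ∑ l ∈ Finset.Ico i k, d l := by
          simp only [hu]
          rw [← Finset.sum_Ico_consecutive _ (by omega : 1 ≤ i) (le_of_lt hik)]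
          ring
        have htel := aux_tel (fun l => c l (j k)) i k (le_of_lt hik)
        have hle : ∑ l ∈ Finset.Ico i k, d l ≤ ∑ l ∈ Finset.Ico i k, (c l (j k) - c (l+1) (j k)) := by
          apply Finset.sum_le_sum
          intro l hl
          rw [Finset.mem_Ico] at hl
          rcases eq_or_lt_of_le (hmono l k (by omega) (le_of_lt hl.2) hk2) with he | hlt
          · simp only [hd]; rw [he]
          · have := hid l (l+1) (j l) (j k) (by omega) (by omega) (by omega) hlt
              (hjm k hk1 hk2)
            simp only [hd]
            linarith
        linarith
    have hja0 : ∀ i, 1 ≤ i → i ≤ n → j i = 0 → u i = 0 := by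
      intro i h1 h2 h3
      simp only [hu]
      apply Finset.sum_eq_zero
      intro k hk
      rw [Finset.mem_Ico] at hk
      have : j k = 0 := by
        have := hmono k i hk.1 (le_of_lt hk.2) h2
        omega
      simp only [hd, this, hc0 k hk.1 (by omega), hc0 (k+1) (by omega) (by omega)]
      ring
    set t : ℕ → ℝ := fun a => if a = 0 then 0 else
      if h : ∃ k, 1 ≤ k ∧ k ≤ n ∧ j k = a then c h.choose a + u h.choose else -1 with ht
    have ht0 : t 0 = 0 := by simp [ht]
    have hwd : ∀ a i, 1 ≤ i → i ≤ n → j i = a → a ≠ 0 → t a = c i a + u i := by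
      intro a i h1 h2 h3 h4
      have hex : ∃ k, 1 ≤ k ∧ k ≤ n ∧ j k = a := ⟨i, h1, h2, h3⟩
      simp only [ht, if_neg h4, dif_pos hex]
      obtain ⟨hk1, hk2, hk3⟩ := hex.choose_spec
      have e1 := hkey hex.choose i hk1 hk2 h1 h2
      have e2 := hkey i hex.choose h1 h2 hk1 hk2
      rw [hk3] at e1
      rw [h3] at e2
      linarith
    have htj : ∀ i, 1 ≤ i → i ≤ n → t (j i) = c i (j i) + u i := by
      intro i h1 h2
      rcases Nat.eq_zero_or_pos (j i) with h0 | hpos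
      · rw [h0, ht0, hc0 i h1 h2, hja0 i h1 h2 h0]; ring
      · exact hwd (j i) i h1 h2 rfl (by omega)
    have hbr : ∀ i, 1 ≤ i → i ≤ n → j i ≤ m ∧ ∀ a ≤ m, t a - c i a ≤ t (j i) - c i (j i) := by
      intro i h1 h2
      refine ⟨hjm i h1 h2, ?_⟩
      intro a ha
      rw [htj i h1 h2]
      have hgoal : t a - c i a ≤ u i := by
        rcases Nat.eq_zero_or_pos a with h0 | hpos
        · rw [h0, ht0, hc0 i h1 h2]
          simpa using hu0 i h1 h2
        · by_cases hex : ∃ k, 1 ≤ k ∧ k ≤ n ∧ j k = a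
          · obtain ⟨k, hk1, hk2, hk3⟩ := hex
            rw [hwd a k hk1 hk2 hk3 (by omega)]
            have := hkey k i hk1 hk2 h1 h2
            rw [hk3] at this
            linarith
          · have : t a = -1 := by simp only [ht, if_neg (by omega : a ≠ 0), dif_neg hex]
            rw [this]
            have := hcnn i h1 h2 a ha
            have := hu0 i h1 h2
            linarith
      linarith
    refine ⟨t, j, ht0, hbr, ?_⟩
    have heq : ∑ i ∈ Finset.Icc 1 n, (ρ (j i) - t (j i))
        = ∑ i ∈ Finset.Icc 1 n, (ρ (j i) - c i (j i)) - ∑ i ∈ Finset.Icc 1 n, u i := by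
      rw [← Finset.sum_sub_distrib]
      apply Finset.sum_congr rfl
      intro i hi
      rw [Finset.mem_Icc] at hi
      have := htj i hi.1 hi.2
      linarith
    have hswap : ∑ i ∈ Finset.Icc 1 n, u i
        = ∑ k ∈ Finset.Ico 1 n, ((n:ℝ) - k) * d k := by
      simp only [hu]
      exact aux_swap n d
    have hφsum := aux_phisum n hn ρ c φ hφ hφn j
    simp only [hd] at hswap hφsum
    rw [heq, hswap, ← hφsum, hMeq]
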